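/- For φ ∈ ℂ, let J^φ be the Jordan superalgebra over ℂ of type (2,3) with homogeneous basis {e₁, e₂; f₁, f₂, f₃} (e_i even, f_j odd) and nonzero products e₁² = e₂, e₁f₂ = f₂e₁ = f₃, e₁f₃ = f₃e₁ = φf₁, e₂f₂ = f₂e₂ = f₁, f₂f₃ = −f₃f₂ = e₂ (all other products of basis vectors zero). Then for φ₁, φ₂ ∈ ℂ, the superalgebras J^{φ₁} and J^{φ₂} are isomorphic via a grading-preserving algebra isomorphism if and only if φ₁ = φ₂. -/
import Mathlib


noncomputable section

/-- The underlying ℤ/2-graded vector space of type `(m,n)`: even part `Fin m → ℂ`,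
odd part `Fin n → ℂ`. -/
abbrev GV (m n : ℕ) : Type := (Fin m → ℂ) × (Fin n → ℂ)

/-- A superalgebra structure tensor of type `(m,n)`: structure constants
`c i j k` (even·even), `ρ i j k` (even·odd) and `Γ i j k` (odd·odd). -/
abbrev Tensor (m n : ℕ) : Type :=
  (Fin m → Fin m → Fin m → ℂ) × (Fin m → Fin n → Fin n → ℂ) × (Fin n → Fin n → Fin m → ℂ)

/-- The ℤ/2-graded multiplication on `GV m n` determined by a structure tensor. -/
def mulOf {m n : ℕ} (μ : Tensor m n) (x y : GV m n) : GV m n :=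
  (fun k => (∑ i, ∑ j, x.1 i * y.1 j * μ.1 i j k) + ∑ i, ∑ j, x.2 i * y.2 j * μ.2.2 i j k,
   fun k => (∑ i, ∑ j, x.1 i * y.2 j * μ.2.1 i j k) + ∑ i, ∑ j, y.1 i * x.2 j * μ.2.1 i j k)

/-- `x` is homogeneous of parity `p` (`p = 0`: even, `p = 1`: odd). -/
def IsHom {m n : ℕ} (p : ℕ) (x : GV m n) : Prop :=
  (p = 0 ∧ x.2 = 0) ∨ (p = 1 ∧ x.1 = 0)

/-- The sign `(-1)^k`. -/
def sgn (k : ℕ) : ℂ := (-1 : ℂ) ^ k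

/-- The super-Jordan expression `J^s(w; x, y, z)` for homogeneous elements of
parities `pw, px, py, pz`. -/
def superJ {m n : ℕ} (μ : Tensor m n) (pw px py pz : ℕ) (w x y z : GV m n) : GV m n :=
  mulOf μ (mulOf μ w x) (mulOf μ y z)
    + sgn (px * py) • mulOf μ (mulOf μ w y) (mulOf μ x z)
    + sgn ((px + py) * pz) • mulOf μ (mulOf μ w z) (mulOf μ x y)
    - sgn (pw * px) • mulOf μ x (mulOf μ w (mulOf μ y z))
    - sgn (py * (pw + px)) • mulOf μ y (mulOf μ w (mulOf μ x z))
    - sgn (pz * (pw + px + py)) • mulOf μ z (mulOf μ w (mulOf μ x y))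

/-- `μ` is a Jordan superalgebra structure: supercommutativity and the Jordan
superidentity hold for all homogeneous elements. -/
def IsJordanSuper {m n : ℕ} (μ : Tensor m n) : Prop :=
  (∀ (px py : ℕ) (x y : GV m n), IsHom px x → IsHom py y →
      mulOf μ x y = sgn (px * py) • mulOf μ y x) ∧
  (∀ (pw px py pz : ℕ) (w x y z : GV m n),
      IsHom pw w → IsHom px x → IsHom py y → IsHom pz z →
      superJ μ pw px py pz w x y z = 0)

/-- The product of two graded subspaces: the span of all products. -/
def mulSub {m n : ℕ} (μ : Tensor m n) (A B : Submodule ℂ (GV m n)) : Submodule ℂ (GV m n) :=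
  Submodule.span ℂ {z | ∃ a ∈ A, ∃ b ∈ B, z = mulOf μ a b}

/-- The powers `J^k`: `J^1 = J` and `J^{k+1} = Σ_{i=1}^{k} J^i · J^{k+1-i}`. -/
def powT {m n : ℕ} (μ : Tensor m n) : ℕ → Submodule ℂ (GV m n)
  | 0 => ⊤
  | 1 => ⊤
  | (k + 2) => ⨆ i : Fin (k + 1), mulSub μ (powT μ ((i : ℕ) + 1)) (powT μ (k + 1 - (i : ℕ)))
  decreasing_by
  · have := i.isLt; omega
  · omega

/-- `μ` is nilpotent: some power vanishes. -/
def IsNilpotentT {m n : ℕ} (μ : Tensor m n) : Prop :=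
  ∃ k : ℕ, 1 ≤ k ∧ powT μ k = ⊥

/-- A grading-preserving algebra isomorphism between the superalgebras determined
by `μ` and `μ'`. -/
def Iso {m n : ℕ} (μ μ' : Tensor m n) : Prop :=
  ∃ (T : (Fin m → ℂ) ≃ₗ[ℂ] (Fin m → ℂ)) (S : (Fin n → ℂ) ≃ₗ[ℂ] (Fin n → ℂ)),
    ∀ x y : GV m n,
      (T ((mulOf μ x y).1), S ((mulOf μ x y).2)) = mulOf μ' (T x.1, S x.2) (T y.1, S y.2)

/-- `μ` degenerates to `μ'`: `μ'` lies in the closure of the orbit of `μ` under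
base change (in the standard topology). -/
def degenerates {m n : ℕ} (μ μ' : Tensor m n) : Prop :=
  μ' ∈ closure {ν : Tensor m n | Iso μ ν}

/-- Standard even basis vector `e_i`. -/
def eps {m n : ℕ} (i : Fin m) : GV m n := (Pi.single i 1, 0)

/-- Standard odd basis vector `f_j`. -/
def ph {m n : ℕ} (j : Fin n) : GV m n := (0, Pi.single j 1)


/-- A tensor of type (2,3) with products `e₁² = a·e₂`, `e₁f_j = Σ_k R1 j k f_k`,
`e₂f_j = Σ_k R2 j k f_k` and `f_if_j = W i j · e₁ + Θ i j · e₂`. -/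
def T23 (a : ℂ) (R1 R2 W Θ : Fin 3 → Fin 3 → ℂ) : Tensor 2 3 :=
  (fun i j k => if i = 0 ∧ j = 0 ∧ k = 1 then a else 0,
   fun i => if i = 0 then R1 else R2,
   fun i j k => if k = 0 then W i j else Θ i j)

/-- `e·f₂ = f₁`. -/
def P21 : Fin 3 → Fin 3 → ℂ := ![![0,0,0], ![1,0,0], ![0,0,0]]
/-- `e·f₃ = f₂`. -/
def P32 : Fin 3 → Fin 3 → ℂ := ![![0,0,0], ![0,0,0], ![0,1,0]]
/-- `e·f₃ = f₁`. -/
def P31 : Fin 3 → Fin 3 → ℂ := ![![0,0,0], ![0,0,0], ![1,0,0]]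
/-- `e·f₂ = f₃`. -/
def P23 : Fin 3 → Fin 3 → ℂ := ![![0,0,0], ![0,0,1], ![0,0,0]]
/-- `f₁f₂ = e`. -/
def W12 : Fin 3 → Fin 3 → ℂ := ![![0,1,0], ![-1,0,0], ![0,0,0]]
/-- `f₁f₃ = e`. -/
def W13 : Fin 3 → Fin 3 → ℂ := ![![0,0,1], ![0,0,0], ![-1,0,0]]
/-- `f₂f₃ = e`. -/
def W23 : Fin 3 → Fin 3 → ℂ := ![![0,0,0], ![0,0,1], ![0,-1,0]]

/-- The family `(2,3)₃₁^λ`: `e₁² = e₂`, `e₁f₂ = f₁`, `f₁f₃ = λe₂`, `f₂f₃ = e₁`. -/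
def A31 (l : ℂ) : Tensor 2 3 := T23 1 P21 0 W23 (l • W13)

/-- The family `(2,3)₄₃^γ`: `e₁² = e₂`, `e₁f₂ = f₃`, `e₁f₃ = γf₁`, `e₂f₂ = f₁`. -/
def A43 (g : ℂ) : Tensor 2 3 := T23 1 (P23 + g • P31) P21 0 0

/-- The family `(2,3)₄₄^φ`: `e₁² = e₂`, `e₁f₂ = f₃`, `e₁f₃ = φf₁`, `e₂f₂ = f₁`,
`f₂f₃ = e₂`. -/
def A44 (p : ℂ) : Tensor 2 3 := T23 1 (P23 + p • P31) P21 0 W23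

/-- the superalgebras (2,3)₄₄^φ are isomorphic iff the parameters agree. -/
lemma m_e1e1 (p : ℂ) : mulOf (A44 p) (eps 0) (eps 0) = eps 1 := by
  refine Prod.ext (funext fun k => ?_) (funext fun k => ?_) <;>
    fin_cases k <;>
      simp [mulOf, A44, T23, eps, ph, Fin.sum_univ_two, Fin.sum_univ_three, Pi.single_apply]

lemma m_e1f1 (p : ℂ) : mulOf (A44 p) (eps 0) (ph 0) = 0 := by
  refine Prod.ext (funext fun k => ?_) (funext fun k => ?_) <;>
    fin_cases k <;>
      simp [mulOf, A44, T23, eps, ph, P23, P31, P21, W23, Fin.sum_univ_two, Fin.sum_univ_three, Pi.single_apply]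

lemma m_e1f2 (p : ℂ) : mulOf (A44 p) (eps 0) (ph 1) = ph 2 := by
  refine Prod.ext (funext fun k => ?_) (funext fun k => ?_) <;>
    fin_cases k <;>
      simp [mulOf, A44, T23, eps, ph, P23, P31, P21, W23, Fin.sum_univ_two, Fin.sum_univ_three, Pi.single_apply]

lemma m_e1f3 (p : ℂ) : mulOf (A44 p) (eps 0) (ph 2) = p • ph 0 := by
  refine Prod.ext (funext fun k => ?_) (funext fun k => ?_) <;>
    fin_cases k <;>
      simp [mulOf, A44, T23, eps, ph, P23, P31, P21, W23, Fin.sum_univ_two, Fin.sum_univ_three, Pi.single_apply]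

lemma m_e2f1 (p : ℂ) : mulOf (A44 p) (eps 1) (ph 0) = 0 := by
  refine Prod.ext (funext fun k => ?_) (funext fun k => ?_) <;>
    fin_cases k <;>
      simp [mulOf, A44, T23, eps, ph, P23, P31, P21, W23, Fin.sum_univ_two, Fin.sum_univ_three, Pi.single_apply]

lemma m_e2f2 (p : ℂ) : mulOf (A44 p) (eps 1) (ph 1) = ph 0 := by
  refine Prod.ext (funext fun k => ?_) (funext fun k => ?_) <;>
    fin_cases k <;>
      simp [mulOf, A44, T23, eps, ph, P23, P31, P21, W23, Fin.sum_univ_two, Fin.sum_univ_three, Pi.single_apply]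

lemma m_e2f3 (p : ℂ) : mulOf (A44 p) (eps 1) (ph 2) = 0 := by
  refine Prod.ext (funext fun k => ?_) (funext fun k => ?_) <;>
    fin_cases k <;>
      simp [mulOf, A44, T23, eps, ph, P23, P31, P21, W23, Fin.sum_univ_two, Fin.sum_univ_three, Pi.single_apply]
lemma rhs_ee (q : ℂ) (u w : Fin 2 → ℂ) (k : Fin 2) :
    (mulOf (A44 q) (u, 0) (w, 0)).1 k = if k = 1 then u 0 * w 0 else 0 := by
  fin_cases k <;>
    simp [mulOf, A44, T23, Fin.sum_univ_two, Fin.sum_univ_three]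

lemma rhs_eo (q : ℂ) (u : Fin 2 → ℂ) (v : Fin 3 → ℂ) :
    (mulOf (A44 q) (u, 0) ((0 : Fin 2 → ℂ), v)).2 =
      ![u 0 * v 2 * q + u 1 * v 1, 0, u 0 * v 1] := by
  funext k
  fin_cases k <;>
    simp [mulOf, A44, T23, P23, P31, P21, W23, Fin.sum_univ_two, Fin.sum_univ_three]
theorem stmt7 : ∀ x y : ℂ, (Iso (A44 x) (A44 y) ↔ x = y) := by
  intro x y
  constructor
  · rintro ⟨T, S, h⟩
    -- names
    set a := T (Pi.single 0 1) 0 with ha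
    set b := T (Pi.single 0 1) 1 with hb
    -- e1 * e1 = e2
    have hB := h (eps 0) (eps 0)
    rw [m_e1e1] at hB
    simp only [eps, map_zero] at hB
    have hB0 : T (Pi.single 1 1) 0 = 0 := by
      have := congrFun (congrArg Prod.fst hB) 0
      rw [rhs_ee] at this; simpa using this
    have hB1 : T (Pi.single 1 1) 1 = a * a := by
      have := congrFun (congrArg Prod.fst hB) 1
      rw [rhs_ee] at this; simpa using this
    -- a ≠ 0
    have ha0 : a ≠ 0 := by
      intro h0
      have hT0 : T (Pi.single 1 1) = 0 := by
        funext k; fin_cases k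
        · simpa using hB0
        · simpa [h0] using hB1
      have h1 : Pi.single (1 : Fin 2) (1 : ℂ) = 0 := T.injective (by simp [hT0])
      have := congrFun h1 1
      simp at this
    -- e2 * f2 = f1
    have h21 := h (eps 1) (ph 1)
    rw [m_e2f2] at h21
    simp only [eps, ph, map_zero] at h21
    have e21 := congrArg Prod.snd h21
    rw [rhs_eo] at e21
    have hS00 : S (Pi.single 0 1) 0 = a * a * S (Pi.single 1 1) 1 := by
      have := congrFun e21 0; simp [hB0, hB1] at this; simpa using this
    have hS01 : S (Pi.single 0 1) 1 = 0 := by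
      have := congrFun e21 1; simpa using this
    have hS02 : S (Pi.single 0 1) 2 = 0 := by
      have := congrFun e21 2; simp [hB0] at this; simpa using this
    -- e2 * f3 = 0
    have h22 := h (eps 1) (ph 2)
    rw [m_e2f3] at h22
    simp only [eps, ph, map_zero, Prod.fst_zero, Prod.snd_zero] at h22
    have e22 := congrArg Prod.snd h22
    rw [rhs_eo] at e22
    have hS21 : S (Pi.single 2 1) 1 = 0 := by
      have := congrFun e22 0
      simp [hB0, hB1] at this
      rcases this with h' | h'
      · exact absurd h' ha0
      · exact h'
    -- e1 * f2 = f3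
    have h11 := h (eps 0) (ph 1)
    rw [m_e1f2] at h11
    simp only [eps, ph, map_zero] at h11
    have e11 := congrArg Prod.snd h11
    rw [rhs_eo] at e11
    have hS22 : S (Pi.single 2 1) 2 = a * S (Pi.single 1 1) 1 := by
      have := congrFun e11 2; simpa using this
    -- S1 1 ≠ 0
    have hs0 : S (Pi.single 1 1) 1 ≠ 0 := by
      intro h0
      have hS0 : S (Pi.single 0 1) = 0 := by
        funext k; fin_cases k
        · simpa [h0] using hS00
        · simpa using hS01
        · simpa using hS02
      have h1 : Pi.single (0 : Fin 3) (1 : ℂ) = 0 := S.injective (by simp [hS0])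
      have := congrFun h1 0
      simp at this
    -- e1 * f3 = x • f1
    have h12 := h (eps 0) (ph 2)
    rw [m_e1f3] at h12
    simp only [eps, ph, map_zero, Prod.smul_snd, map_smul] at h12
    have e12 := congrArg Prod.snd h12
    rw [rhs_eo] at e12
    have key : x * S (Pi.single 0 1) 0 = a * S (Pi.single 2 1) 2 * y + b * S (Pi.single 2 1) 1 := by
      have := congrFun e12 0; simpa using this
    rw [hS00, hS22, hS21] at key
    have hz : (x - y) * (a * a * S (Pi.single 1 1) 1) = 0 := by linear_combination key
    rcases mul_eq_zero.mp hz with h' | h'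
    · exact sub_eq_zero.mp h'
    · exact absurd h' (mul_ne_zero (mul_ne_zero ha0 ha0) hs0)
  · rintro rfl
    exact ⟨LinearEquiv.refl ℂ _, LinearEquiv.refl ℂ _, fun u v => by simp⟩

end
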